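/- Let V : ℕ → ℤ[T,T⁻¹] satisfy the Jones recurrence V(m+2) = (T³ − T)·V(m+1) + T⁴·V(m) for all m. Suppose the pair (V(0), V(1)) is stable, i.e. deg V(1) > 1 + deg V(0) in WithBot ℤ. Then: (i) for every m, the pair (V(m), V(m+1)) is stable; (ii) for every m ≥ 1, deg V(m) = deg V(1) + 3·(m − 1); (iii) for every m ≥ 1, the leading coefficient of V(m) equals the leading coefficient of V(1). -/

import Mathlib

/-- The degree of a Laurent polynomial `f`, viewed as a finitely supported function
`ℤ → ℤ`: the maximum of its support in `WithBot ℤ` (so `jdeg 0 = ⊥`). -/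
noncomputable def jdeg (f : LaurentPolynomial ℤ) : WithBot ℤ :=
  (AddMonoidAlgebra.coeff f : ℤ →₀ ℤ).support.max

/-- The leading coefficient of a Laurent polynomial: its coefficient at `jdeg f`
(for `f ≠ 0`; by convention `jcoeff 0 = 0`). -/
noncomputable def jcoeff (f : LaurentPolynomial ℤ) : ℤ :=
  (AddMonoidAlgebra.coeff f : ℤ →₀ ℤ) (((AddMonoidAlgebra.coeff f : ℤ →₀ ℤ).support.max).unbotD 0)

open LaurentPolynomial

def jc (f : LaurentPolynomial ℤ) (n : ℤ) : ℤ := (AddMonoidAlgebra.coeff f : ℤ →₀ ℤ) n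

lemma coeff_eq_zero_of_jdeg_lt {f : LaurentPolynomial ℤ} {n : ℤ} (h : jdeg f < (n : WithBot ℤ)) :
    jc f n = 0 := by
  by_contra hn
  unfold jdeg at h
  exact absurd (Finset.le_max (Finsupp.mem_support_iff.mpr hn)) (not_le.mpr h)

lemma jdeg_eq {f : LaurentPolynomial ℤ} {d : ℤ} (h1 : jc f d ≠ 0)
    (h2 : ∀ x : ℤ, d < x → jc f x = 0) : jdeg f = (d : WithBot ℤ) := by
  unfold jdeg
  refine le_antisymm (Finset.max_le ?_) (Finset.le_max (Finsupp.mem_support_iff.mpr h1))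
  intro x hx
  rw [Finsupp.mem_support_iff] at hx
  by_contra hlt
  push_neg at hlt
  exact hx (h2 x (by exact_mod_cast hlt))

lemma jcoeff_of_jdeg_eq {f : LaurentPolynomial ℤ} {d : ℤ} (h : jdeg f = (d : WithBot ℤ)) :
    jcoeff f = jc f d := by
  unfold jcoeff
  rw [show (AddMonoidAlgebra.coeff f).support.max = (d : WithBot ℤ) from h]
  rfl

lemma rec_coeff (f g : LaurentPolynomial ℤ) (y : ℤ) :
    jc ((T 3 - T 1) * f + T 4 * g) y = jc f (y - 3) - jc f (y - 1) + jc g (y - 4) := by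
  have hT : ∀ (n : ℤ) (h : LaurentPolynomial ℤ), jc (T n * h) y = jc h (y - n) := by
    intro n h
    show ((AddMonoidAlgebra.single n (1:ℤ)) * h).coeff y = _
    rw [AddMonoidAlgebra.coeff_single_mul_apply, one_mul]
    show jc h (-n + y) = jc h (y - n)
    ring_nf
  have : jc ((T 3 - T 1) * f + T 4 * g) y
      = jc (T 3 * f) y - jc (T 1 * f) y + jc (T 4 * g) y := by
    show ((T 3 - T 1) * f + T 4 * g).coeff y = _
    rw [sub_mul]
    rfl
  rw [this, hT, hT, hT]

lemma jcoeff_ne_zero {f : LaurentPolynomial ℤ} {d : ℤ} (h : jdeg f = (d : WithBot ℤ)) :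
    jcoeff f ≠ 0 := by
  rw [jcoeff_of_jdeg_eq h]
  exact Finsupp.mem_support_iff.mp (Finset.mem_of_max (show (AddMonoidAlgebra.coeff f).support.max = (d : WithBot ℤ) from h))


open LaurentPolynomial in
/-- **Proposition 3.2** (stable case). If `V` satisfies the Jones recurrence and the
pair `(V 0, V 1)` is stable (`deg V 1 > 1 + deg V 0`), then every pair
`(V m, V (m+1))` is stable, `deg V m = deg V 1 + 3(m−1)` for `m ≥ 1`, and the leading
coefficient of `V m` equals that of `V 1` for `m ≥ 1`. -/
theorem jones_stable_case (V : ℕ → LaurentPolynomial ℤ)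
    (hV : ∀ m : ℕ, V (m + 2) = (T 3 - T 1) * V (m + 1) + T 4 * V m)
    (hstab : 1 + jdeg (V 0) < jdeg (V 1)) :
    (∀ m : ℕ, 1 + jdeg (V m) < jdeg (V (m + 1))) ∧
    (∀ m : ℕ, 1 ≤ m → jdeg (V m) = jdeg (V 1) + ((3 * ((m : ℤ) - 1) : ℤ) : WithBot ℤ)) ∧
    (∀ m : ℕ, 1 ≤ m → jcoeff (V m) = jcoeff (V 1)) := by
  obtain ⟨d1, hd1⟩ : ∃ d1 : ℤ, jdeg (V 1) = (d1 : WithBot ℤ) := by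
    cases h : jdeg (V 1) with
    | bot => rw [h] at hstab; exact absurd hstab (by simp)
    | coe d => exact ⟨d, rfl⟩
  have key : ∀ m : ℕ, jdeg (V (m + 1)) = ((d1 + 3 * m : ℤ) : WithBot ℤ) ∧
      jcoeff (V (m + 1)) = jcoeff (V 1) ∧ 1 + jdeg (V m) < jdeg (V (m + 1)) := by
    intro m
    induction m with
    | zero => exact ⟨by simpa using hd1, rfl, hstab⟩
    | succ m ih =>
      obtain ⟨hd, hc, hs⟩ := ih
      set d : ℤ := d1 + 3 * m with hddef
      -- coefficient facts
      have hc0 : jc (V (m + 1)) d = jcoeff (V (m + 1)) := (jcoeff_of_jdeg_eq hd).symm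
      have hcne : jc (V (m + 1)) d ≠ 0 := by
        rw [hc0]; exact hc ▸ jcoeff_ne_zero hd1
      have hVm : jdeg (V m) < ((d - 1 : ℤ) : WithBot ℤ) := by
        rw [hd] at hs
        cases h : jdeg (V m) with
        | bot => exact WithBot.bot_lt_coe _
        | coe e =>
          rw [h] at hs
          have : (1 : ℤ) + e < d := by exact_mod_cast hs
          exact_mod_cast (by omega : e < d - 1)
      have hzero1 : ∀ x : ℤ, d < x → jc (V (m + 1)) x = 0 := fun x hx =>
        coeff_eq_zero_of_jdeg_lt (hd ▸ (by exact_mod_cast hx))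
      have hzero0 : ∀ x : ℤ, d - 1 ≤ x → jc (V m) x = 0 := fun x hx =>
        coeff_eq_zero_of_jdeg_lt (lt_of_lt_of_le hVm (by exact_mod_cast hx))
      have htop : jc (V (m + 2)) (d + 3) = jc (V (m + 1)) d := by
        rw [hV m, rec_coeff]
        rw [show d + 3 - 3 = d by ring, hzero1 (d + 3 - 1) (by omega),
          hzero0 (d + 3 - 4) (by omega)]
        ring
      have hdeg2 : jdeg (V (m + 2)) = ((d + 3 : ℤ) : WithBot ℤ) := by
        refine jdeg_eq (htop ▸ hcne) fun x hx => ?_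
        rw [hV m, rec_coeff, hzero1 (x - 3) (by omega), hzero1 (x - 1) (by omega),
          hzero0 (x - 4) (by omega)]
        ring
      refine ⟨by rw [hdeg2]; exact_mod_cast (by ring : (d:ℤ) + 3 = d1 + 3 * ((m:ℤ)+1)), ?_, ?_⟩
      · rw [jcoeff_of_jdeg_eq hdeg2, htop, hc0, hc]
      · rw [hd, hdeg2]
        exact_mod_cast (by omega : (1 : ℤ) + d < d + 3)
  refine ⟨fun m => (key m).2.2, fun m hm => ?_, fun m hm => ?_⟩
  · obtain ⟨k, rfl⟩ := Nat.exists_eq_add_of_le hm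
    rw [show 1 + k = k + 1 from by omega, (key k).1, hd1, ← WithBot.coe_add]
    exact_mod_cast (by push_cast; ring : d1 + 3 * (k:ℤ) = d1 + 3 * (((k+1:ℕ):ℤ) - 1))
  · obtain ⟨k, rfl⟩ := Nat.exists_eq_add_of_le hm
    rw [show 1 + k = k + 1 from by omega]
    exact (key k).2.1
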